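/- Let C, D ≥ 0 and θᵢ, θⱼ real with θⱼ ≠ 0. Then |θⱼ| + √((C + |θⱼ|)² + D + θᵢ²) > √(C² + D + (θᵢ + θⱼ)²). Consequently, in the perfectly correlated setting with i a known feature (rᵢ=1) and j unknown (rⱼ=0), transferring all of θⱼ onto θᵢ strictly decreases the EYE penalty. -/
import Mathlib


theorem eye_transfer_strict (C D θi θj : ℝ) (hC : 0 ≤ C) (hD : 0 ≤ D)
    (hj : θj ≠ 0) :
    Real.sqrt (C ^ 2 + D + (θi + θj) ^ 2) <
      |θj| + Real.sqrt ((C + |θj|) ^ 2 + D + θi ^ 2) := by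
  set a := |θj| with ha'
  have ha : 0 < a := abs_pos.mpr hj
  set X := (C + a) ^ 2 + D + θi ^ 2 with hX
  have hX0 : 0 ≤ X := by positivity
  have hsX : Real.sqrt X ^ 2 = X := Real.sq_sqrt hX0
  have hsXnn : 0 ≤ Real.sqrt X := Real.sqrt_nonneg X
  have habs : |θi| ≤ Real.sqrt X := by
    rw [← Real.sqrt_sq_eq_abs]
    apply Real.sqrt_le_sqrt
    nlinarith [abs_nonneg θj]
  have h1 : Real.sqrt (C ^ 2 + D + (θi + θj) ^ 2) ≤
      Real.sqrt (C ^ 2 + D + (|θi| + a) ^ 2) := by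
    apply Real.sqrt_le_sqrt
    have := abs_add_le θi θj
    nlinarith [sq_abs (θi + θj), abs_nonneg (θi + θj), abs_nonneg θi]
  refine lt_of_le_of_lt h1 ?_
  rw [Real.sqrt_lt' (by positivity)]
  nlinarith [hsX, sq_abs θi, mul_le_mul_of_nonneg_left habs ha.le, mul_pos ha ha, mul_nonneg ha.le hC]
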